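/- arXiv:2503.12733 — 2 statements merged into one kernel-verified Lean document; each statement's English description precedes it below -/
import Mathlib

section
/- Let H be a finite-dimensional real inner product space, let 𝒰 ⊆ H be a nonempty closed convex set, let R : H → ℝ ∪ {+∞} be a proper lower semicontinuous convex function with dom R ∩ 𝒰 nonempty, and let f : H → ℝ be differentiable with L-Lipschitz gradient for some L > 0. Let U⁰ ∈ 𝒰 and, for l = 1, …, N, let Uˡ be a minimizer over U ∈ 𝒰 of ⟨∇f(U^{l−1}), U⟩ + (L/2)‖U − U^{l−1}‖² + R(U). Then f(U^N) + R(U^N) + ∑_{l=1}^N (L/2)‖Uˡ − U^{l−1}‖² ≤ f(U⁰) + R(U⁰). -/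
open scoped RealInnerProductSpace

lemma descent_lemma' {H : Type*} [NormedAddCommGroup H] [InnerProductSpace ℝ H] [CompleteSpace H]
    (f : H → ℝ) (f' : H → H) (hf : ∀ x, HasGradientAt f (f' x) x)
    (L : ℝ) (hlip : ∀ x y : H, ‖f' x - f' y‖ ≤ L * ‖x - y‖)
    (x y : H) : f y ≤ f x + ⟪f' x, y - x⟫ + L / 2 * ‖y - x‖ ^ 2 := by
  set v := y - x with hv
  set g : ℝ → ℝ := fun t => f (x + t • v) - t * ⟪f' x, v⟫ - L / 2 * t ^ 2 * ‖v‖ ^ 2 with hg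
  have hc : ∀ t : ℝ, HasDerivAt (fun t : ℝ => x + t • v) v t := fun t => by
    simpa using ((hasDerivAt_id t).smul_const v).const_add x
  have hder : ∀ t : ℝ, HasDerivAt g (⟪f' (x + t • v), v⟫ - ⟪f' x, v⟫ - L * t * ‖v‖ ^ 2) t := by
    intro t
    have h1 : HasDerivAt (fun t : ℝ => f (x + t • v)) ⟪f' (x + t • v), v⟫ t := by
      have := (hf (x + t • v)).hasFDerivAt.comp_hasDerivAt t (hc t)
      simp at this; exact this
    have h2 : HasDerivAt (fun t : ℝ => t * ⟪f' x, v⟫) ⟪f' x, v⟫ t := by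
      simpa using (hasDerivAt_id t).mul_const (⟪f' x, v⟫ : ℝ)
    have h3 : HasDerivAt (fun t : ℝ => L / 2 * t ^ 2 * ‖v‖ ^ 2)
        (L / 2 * (2 * t) * ‖v‖ ^ 2) t := by
      have := ((hasDerivAt_pow 2 t).const_mul (L / 2)).mul_const (‖v‖ ^ 2)
      simpa using this
    have := (h1.sub h2).sub h3
    convert this using 1
    · rfl
    · rfl
    · rfl
    · ring
  have hanti : AntitoneOn g (Set.Icc (0:ℝ) 1) := by
    apply antitoneOn_of_hasDerivWithinAt_nonpos (convex_Icc 0 1)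
      (fun t _ => (hder t).continuousAt.continuousWithinAt)
      (fun t _ => (hder t).hasDerivWithinAt)
    intro t ht
    rw [interior_Icc] at ht
    have h4 : ⟪f' (x + t • v) - f' x, v⟫ ≤ ‖f' (x + t • v) - f' x‖ * ‖v‖ :=
      real_inner_le_norm _ _
    have h5 : ‖f' (x + t • v) - f' x‖ ≤ L * ‖t • v‖ := by
      simpa using hlip (x + t • v) x
    rw [norm_smul, Real.norm_eq_abs, abs_of_pos ht.1] at h5
    have h6 : ⟪f' (x + t • v) - f' x, v⟫ = ⟪f' (x + t • v), v⟫ - ⟪f' x, v⟫ :=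
      inner_sub_left _ _ _
    have hvn : (0:ℝ) ≤ ‖v‖ := norm_nonneg v
    nlinarith [h4, h5, h6, ht.1.le, mul_le_mul_of_nonneg_right h5 hvn]
  have h01 := hanti (Set.left_mem_Icc.mpr zero_le_one) (Set.right_mem_Icc.mpr zero_le_one)
    zero_le_one
  simp only [hg, zero_smul, add_zero, one_smul, zero_mul, one_mul, one_pow, zero_pow,
    mul_zero, sub_zero] at h01
  have hyx : x + v = y := by rw [hv]; abel
  rw [hyx] at h01
  linarith


lemma prox_step_lemma {H : Type*} [NormedAddCommGroup H] [InnerProductSpace ℝ H] [CompleteSpace H]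
    (𝒰 : Set H) (h𝒰convex : Convex ℝ 𝒰)
    (R : H → EReal) (hRnebot : ∀ x, R x ≠ ⊥)
    (hRconvex : ∀ x y : H, ∀ a b : ℝ, 0 ≤ a → 0 ≤ b → a + b = 1 →
      R (a • x + b • y) ≤ (a : EReal) * R x + (b : EReal) * R y)
    (f : H → ℝ) (f' : H → H) (hf : ∀ x, HasGradientAt f (f' x) x)
    (L : ℝ) (hL : 0 < L)
    (hlip : ∀ x y : H, ‖f' x - f' y‖ ≤ L * ‖x - y‖)
    (u v : H) (hu : u ∈ 𝒰) (hv : v ∈ 𝒰) (hvtop : R v ≠ ⊤)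
    (hmin : ∀ X ∈ 𝒰,
      ((⟪f' v, u⟫ + (L / 2) * ‖u - v‖ ^ 2 : ℝ) : EReal) + R u ≤
      ((⟪f' v, X⟫ + (L / 2) * ‖X - v‖ ^ 2 : ℝ) : EReal) + R X) :
    R u ≠ ⊤ ∧ ((f u + (L / 2) * ‖u - v‖ ^ 2 : ℝ) : EReal) + R u ≤ ((f v : ℝ) : EReal) + R v := by
  have hvv := hmin v hv
  simp only [sub_self, norm_zero] at hvv
  -- R u ≠ ⊤
  have hutop : R u ≠ ⊤ := by
    intro h
    rw [h, EReal.coe_add_top] at hvv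
    have : ((⟪f' v, v⟫ + L / 2 * 0 ^ 2 : ℝ) : EReal) + R v < ⊤ := by
      rw [← EReal.coe_toReal hvtop (hRnebot v), ← EReal.coe_add]
      exact EReal.coe_lt_top _
    exact absurd (lt_of_le_of_lt hvv this) (lt_irrefl _)
  refine ⟨hutop, ?_⟩
  set ru := (R u).toReal with hru
  set rv := (R v).toReal with hrv
  have hRu : R u = (ru : EReal) := (EReal.coe_toReal hutop (hRnebot u)).symm
  have hRv : R v = (rv : EReal) := (EReal.coe_toReal hvtop (hRnebot v)).symm
  set d := ‖u - v‖ with hd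
  set A := (⟪f' v, u⟫ : ℝ) with hA
  set B := (⟪f' v, v⟫ : ℝ) with hB
  -- key strong-minimality inequality via convex combinations
  have hkey : ∀ t : ℝ, 0 < t → t ≤ 1 →
      A - B + ru - rv + L * d ^ 2 ≤ L / 2 * d ^ 2 * t := by
    intro t ht0 ht1
    set Xt := (1 - t) • u + t • v with hXt
    have hXtmem : Xt ∈ 𝒰 := h𝒰convex hu hv (by linarith) ht0.le (by ring)
    have hRXt : R Xt ≤ (((1 - t) * ru + t * rv : ℝ) : EReal) := by
      have := hRconvex u v (1 - t) t (by linarith) ht0.le (by ring)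
      rw [hRu, hRv] at this
      rw [EReal.coe_add, EReal.coe_mul, EReal.coe_mul]
      exact this
    have hXttop : R Xt ≠ ⊤ := fun h => by
      rw [h] at hRXt
      exact absurd hRXt (not_le.mpr (EReal.coe_lt_top _))
    set rt := (R Xt).toReal with hrt
    have hRXt' : R Xt = (rt : EReal) := (EReal.coe_toReal hXttop (hRnebot Xt)).symm
    have hrtle : rt ≤ (1 - t) * ru + t * rv := by
      rw [hRXt'] at hRXt
      exact_mod_cast hRXt
    have hmt := hmin Xt hXtmem
    rw [hRu, hRXt', ← EReal.coe_add, ← EReal.coe_add, EReal.coe_le_coe_iff] at hmt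
    -- compute inner products and norms
    have hinner : (⟪f' v, Xt⟫ : ℝ) = (1 - t) * A + t * B := by
      rw [hXt, inner_add_right, real_inner_smul_right, real_inner_smul_right]
    have hnorm : ‖Xt - v‖ = (1 - t) * d := by
      have : Xt - v = (1 - t) • (u - v) := by
        rw [hXt]; module
      rw [this, norm_smul, Real.norm_eq_abs, abs_of_nonneg (by linarith)]
    rw [hinner, hnorm] at hmt
    have hd0 : (0:ℝ) ≤ d ^ 2 := sq_nonneg d
    nlinarith [hmt, hrtle, ht0, mul_pos ht0 ht0]
  -- pass to the limit t → 0
  have hkey0 : A - B + ru - rv + L * d ^ 2 ≤ 0 := by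
    by_contra hC
    push_neg at hC
    set C := A - B + ru - rv + L * d ^ 2 with hCdef
    have hCpos : 0 < C := hC
    have heps : 0 < L / 2 * d ^ 2 := by
      have := hkey 1 one_pos le_rfl
      nlinarith
    have hdne : d ≠ 0 := by
      intro h
      rw [h] at heps
      simp at heps
    set t := min 1 (C / (L * d ^ 2)) with htdef
    have ht0 : 0 < t := lt_min one_pos (div_pos hCpos (by nlinarith))
    have ht1 : t ≤ 1 := min_le_left _ _
    have hk := hkey t ht0 ht1
    have h2 : L / 2 * d ^ 2 * t ≤ L / 2 * d ^ 2 * (C / (L * d ^ 2)) :=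
      mul_le_mul_of_nonneg_left (min_le_right _ _) heps.le
    have h3 : L / 2 * d ^ 2 * (C / (L * d ^ 2)) = C / 2 := by
      field_simp
    linarith
  have hdesc : f u ≤ f v + ⟪f' v, u - v⟫ + L / 2 * d ^ 2 :=
    descent_lemma' f f' hf L hlip v u
  have hiAB : (⟪f' v, u - v⟫ : ℝ) = A - B := inner_sub_right _ _ _
  rw [hRu, hRv, ← EReal.coe_add, ← EReal.coe_add, EReal.coe_le_coe_iff]
  rw [hiAB] at hdesc
  nlinarith [hdesc, hkey0, sq_nonneg d, hL]

/-- descent property of `N` successive proximal gradient steps for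
an `L`-smooth function `f` plus a proper lsc convex extended-real-valued
regularizer `R`, minimized over a nonempty closed convex set `𝒰`. -/
theorem prox_grad_N_steps_descent
    {H : Type*} [NormedAddCommGroup H] [InnerProductSpace ℝ H] [FiniteDimensional ℝ H]
    (𝒰 : Set H) (h𝒰ne : 𝒰.Nonempty) (h𝒰closed : IsClosed 𝒰) (h𝒰convex : Convex ℝ 𝒰)
    (R : H → EReal)
    (hRlsc : LowerSemicontinuous R)
    (hRnebot : ∀ x, R x ≠ ⊥)
    (hRconvex : ∀ x y : H, ∀ a b : ℝ, 0 ≤ a → 0 ≤ b → a + b = 1 →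
      R (a • x + b • y) ≤ (a : EReal) * R x + (b : EReal) * R y)
    (hdom : ∃ x ∈ 𝒰, R x ≠ ⊤)
    (f : H → ℝ) (f' : H → H) (hf : ∀ x, HasGradientAt f (f' x) x)
    (L : ℝ) (hL : 0 < L)
    (hlip : ∀ x y : H, ‖f' x - f' y‖ ≤ L * ‖x - y‖)
    (N : ℕ) (U : ℕ → H) (hU0 : U 0 ∈ 𝒰)
    (hmem : ∀ l ∈ Finset.Icc 1 N, U l ∈ 𝒰)
    (hmin : ∀ l ∈ Finset.Icc 1 N, ∀ X ∈ 𝒰,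
      ((⟪f' (U (l - 1)), U l⟫ + (L / 2) * ‖U l - U (l - 1)‖ ^ 2 : ℝ) : EReal) + R (U l) ≤
      ((⟪f' (U (l - 1)), X⟫ + (L / 2) * ‖X - U (l - 1)‖ ^ 2 : ℝ) : EReal) + R X) :
    ((f (U N) + ∑ l ∈ Finset.Icc 1 N, (L / 2) * ‖U l - U (l - 1)‖ ^ 2 : ℝ) : EReal) + R (U N) ≤
      ((f (U 0) : ℝ) : EReal) + R (U 0) := by
  by_cases htop : R (U 0) = ⊤
  · rcases Nat.eq_zero_or_pos N with h | h
    · subst h; simp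
    · rw [htop, EReal.coe_add_top]
      exact le_top
  · suffices h : ∀ n, n ≤ N → R (U n) ≠ ⊤ ∧
        ((f (U n) + ∑ l ∈ Finset.Icc 1 n, (L / 2) * ‖U l - U (l - 1)‖ ^ 2 : ℝ) : EReal)
          + R (U n) ≤ ((f (U 0) : ℝ) : EReal) + R (U 0) by
      exact (h N le_rfl).2
    intro n
    induction n with
    | zero => intro _; exact ⟨htop, by simp⟩
    | succ n ih =>
      intro hn
      have hn' : n ≤ N := Nat.le_of_succ_le hn
      obtain ⟨hntop, hineq⟩ := ih hn'
      have hUn : U n ∈ 𝒰 := by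
        rcases Nat.eq_zero_or_pos n with h0 | h0
        · rw [h0]; exact hU0
        · exact hmem n (Finset.mem_Icc.mpr ⟨h0, hn'⟩)
      have hsucc : n + 1 ∈ Finset.Icc 1 N :=
        Finset.mem_Icc.mpr ⟨Nat.succ_le_succ (Nat.zero_le n), hn⟩
      have hUn1 : U (n + 1) ∈ 𝒰 := hmem _ hsucc
      have hminn := hmin (n + 1) hsucc
      simp only [Nat.add_sub_cancel] at hminn
      obtain ⟨htop1, hstep⟩ := prox_step_lemma 𝒰 h𝒰convex R hRnebot hRconvex f f' hf L hL hlip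
        (U (n + 1)) (U n) hUn1 hUn hntop hminn
      refine ⟨htop1, ?_⟩
      set S := ∑ l ∈ Finset.Icc 1 n, (L / 2) * ‖U l - U (l - 1)‖ ^ 2 with hS
      have hsum : ∑ l ∈ Finset.Icc 1 (n + 1), (L / 2) * ‖U l - U (l - 1)‖ ^ 2
          = S + (L / 2) * ‖U (n + 1) - U n‖ ^ 2 := by
        rw [hS, Finset.sum_Icc_succ_top (Nat.succ_le_succ (Nat.zero_le n))]
        simp
      calc ((f (U (n + 1)) + ∑ l ∈ Finset.Icc 1 (n + 1), (L / 2) * ‖U l - U (l - 1)‖ ^ 2 : ℝ)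
              : EReal) + R (U (n + 1))
          = (((f (U (n + 1)) + (L / 2) * ‖U (n + 1) - U n‖ ^ 2 : ℝ) : EReal) + R (U (n + 1)))
              + ((S : ℝ) : EReal) := by
            rw [hsum]; push_cast; abel
        _ ≤ (((f (U n) : ℝ) : EReal) + R (U n)) + ((S : ℝ) : EReal) :=
            add_le_add_left hstep _
        _ = ((f (U n) + S : ℝ) : EReal) + R (U n) := by push_cast; abel
        _ ≤ ((f (U 0) : ℝ) : EReal) + R (U 0) := hineq
end

section
/- Let H be a finite-dimensional real inner product space, let f : H → ℝ be differentiable with L-Lipschitz gradient for some L > 0, let p > 0, β > 0, and fix Y, V, W₀ ∈ H. Define ℒ(W) := (1/p) f(W) + ⟨Y, W − V⟩ + (β/2)‖W − V‖². Let W' be the minimizer over W ∈ H of ⟨(1/p)∇f(W₀) + Y, W⟩ + (L/(2p))‖W − W₀‖² + (β/2)‖W − V‖². Then ℒ(W') + (L/(2p))‖W' − W₀‖² ≤ ℒ(W₀). -/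
open scoped RealInnerProductSpace

lemma descent_aux {H : Type*} [NormedAddCommGroup H] [InnerProductSpace ℝ H] [CompleteSpace H]
    (f : H → ℝ) (f' : H → H) (hf : ∀ x, HasGradientAt f (f' x) x)
    (L : ℝ) (hL : 0 ≤ L) (hlip : ∀ x y : H, ‖f' x - f' y‖ ≤ L * ‖x - y‖) (x y : H) :
    f y ≤ f x + ⟪f' x, y - x⟫ + L / 2 * ‖y - x‖ ^ 2 := by
  set v := y - x with hv
  set g : ℝ → ℝ := fun t => f (x + t • v) - t * ⟪f' x, v⟫ - L / 2 * t ^ 2 * ‖v‖ ^ 2 with hg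
  have hcurve : ∀ t : ℝ, HasDerivAt (fun t : ℝ => x + t • v) v t := by
    intro t
    simpa using ((hasDerivAt_id t).smul_const v).const_add x
  have hderiv : ∀ t : ℝ, HasDerivAt g
      (⟪f' (x + t • v), v⟫ - ⟪f' x, v⟫ - L / 2 * (2 * t) * ‖v‖ ^ 2) t := by
    intro t
    have h1 : HasDerivAt (fun t : ℝ => f (x + t • v)) (⟪f' (x + t • v), v⟫) t := by
      have := (hf (x + t • v)).hasFDerivAt.comp_hasDerivAt t (hcurve t)
      simp at this
      exact this
    have h2 : HasDerivAt (fun t : ℝ => t * ⟪f' x, v⟫) (⟪f' x, v⟫) t := by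
      simpa using (hasDerivAt_id t).mul_const (⟪f' x, v⟫)
    have h3 : HasDerivAt (fun t : ℝ => L / 2 * t ^ 2 * ‖v‖ ^ 2) (L / 2 * (2 * t) * ‖v‖ ^ 2) t := by
      have h30 := ((hasDerivAt_pow 2 t).const_mul (L / 2)).mul_const (‖v‖ ^ 2)
      simp only [Nat.cast_ofNat, pow_one] at h30
      exact h30.congr_deriv (by norm_num)
    exact (h1.sub h2).sub h3
  have key : g 1 - g 0 ≤ 0 * (1 - 0) := by
    apply (convex_Icc (0:ℝ) 1).image_sub_le_mul_sub_of_deriv_le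
      (fun t _ => ((hderiv t).differentiableAt).continuousAt.continuousWithinAt)
      (fun t _ => ((hderiv t).differentiableAt).differentiableWithinAt)
      ?_ 0 (by norm_num) 1 (by norm_num) (by norm_num)
    intro t ht
    rw [interior_Icc] at ht
    rw [(hderiv t).deriv]
    have hb : ⟪f' (x + t • v) - f' x, v⟫ ≤ ‖f' (x + t • v) - f' x‖ * ‖v‖ :=
      real_inner_le_norm _ _
    have hb2 : ‖f' (x + t • v) - f' x‖ ≤ L * (t * ‖v‖) := by
      have := hlip (x + t • v) x
      simpa [norm_smul, abs_of_pos ht.1, mul_assoc] using this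
    have hvn : (0:ℝ) ≤ ‖v‖ := norm_nonneg v
    have : ⟪f' (x + t • v), v⟫ - ⟪f' x, v⟫ ≤ L * t * ‖v‖ ^ 2 := by
      rw [← inner_sub_left]
      calc ⟪f' (x + t • v) - f' x, v⟫ ≤ ‖f' (x + t • v) - f' x‖ * ‖v‖ := hb
        _ ≤ L * (t * ‖v‖) * ‖v‖ := by nlinarith
        _ = L * t * ‖v‖ ^ 2 := by ring
    nlinarith
  have exy : x + v = y := by rw [hv]; abel
  have e0 : g 0 = f x := by simp [hg]
  have e1 : g 1 = f y - ⟪f' x, v⟫ - L / 2 * ‖v‖ ^ 2 := by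
    simp [hg, exy]
  rw [e0, e1] at key
  norm_num at key
  linarith [key]

/-- descent of one linearized proximal step on the augmented
Lagrangian piece `ℒ(W) = (1/p) f(W) + ⟨Y, W − V⟩ + (β/2)‖W − V‖²`. -/
theorem aug_lagrangian_W_step_descent
    {H : Type*} [NormedAddCommGroup H] [InnerProductSpace ℝ H] [FiniteDimensional ℝ H]
    (f : H → ℝ) (f' : H → H) (hf : ∀ x, HasGradientAt f (f' x) x)
    (L : ℝ) (hL : 0 < L)
    (hlip : ∀ x y : H, ‖f' x - f' y‖ ≤ L * ‖x - y‖)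
    (p β : ℝ) (hp : 0 < p) (hβ : 0 < β)
    (Y V W₀ W' : H)
    (hmin : ∀ W : H,
      ⟪(1 / p) • f' W₀ + Y, W'⟫ + (L / (2 * p)) * ‖W' - W₀‖ ^ 2 + (β / 2) * ‖W' - V‖ ^ 2 ≤
      ⟪(1 / p) • f' W₀ + Y, W⟫ + (L / (2 * p)) * ‖W - W₀‖ ^ 2 + (β / 2) * ‖W - V‖ ^ 2) :
    ((1 / p) * f W' + ⟪Y, W' - V⟫ + (β / 2) * ‖W' - V‖ ^ 2) + (L / (2 * p)) * ‖W' - W₀‖ ^ 2 ≤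
      (1 / p) * f W₀ + ⟪Y, W₀ - V⟫ + (β / 2) * ‖W₀ - V‖ ^ 2 := by
  set Δ := W' - W₀ with hΔ
  set c := (1 / p) • f' W₀ + Y with hc
  set a := L / (2 * p) with ha
  set b := β / 2 with hb
  have ha0 : 0 < a := by positivity
  have hb0 : 0 < b := by positivity
  -- first order optimality: G ≤ 0
  have hG : ⟪c, Δ⟫ + 2 * a * ‖Δ‖ ^ 2 + 2 * b * ⟪W' - V, Δ⟫ ≤ 0 := by
    have key : ∀ t : ℝ, 0 < t → t ≤ 1 →
        ⟪c, Δ⟫ + 2 * a * ‖Δ‖ ^ 2 + 2 * b * ⟪W' - V, Δ⟫ ≤ t * ((a + b) * ‖Δ‖ ^ 2) := by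
      intro t ht ht1
      have h := hmin (W' - t • Δ)
      have e1 : ⟪c, W' - t • Δ⟫ = ⟪c, W'⟫ - t * ⟪c, Δ⟫ := by
        rw [inner_sub_right, inner_smul_right]
      have e2 : ‖W' - t • Δ - W₀‖ ^ 2 = (1 - t) ^ 2 * ‖Δ‖ ^ 2 := by
        have : W' - t • Δ - W₀ = (1 - t) • Δ := by
          rw [sub_smul, one_smul, hΔ]; abel
        rw [this, norm_smul]
        simp [mul_pow, sq_abs]
      have e3 : ‖W' - t • Δ - V‖ ^ 2 =
          ‖W' - V‖ ^ 2 - 2 * t * ⟪W' - V, Δ⟫ + t ^ 2 * ‖Δ‖ ^ 2 := by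
        have heq : W' - t • Δ - V = (W' - V) - t • Δ := by abel
        rw [heq, norm_sub_sq_real, inner_smul_right, norm_smul]
        simp [mul_pow, sq_abs]; ring
      rw [e1, e2, e3] at h
      have hΔW : ‖W' - W₀‖ = ‖Δ‖ := by rw [hΔ]
      rw [hΔW] at h
      have expand : (1 - t) ^ 2 = 1 - 2 * t + t ^ 2 := by ring
      nlinarith [h, sq_nonneg t, norm_nonneg Δ]
    rcases le_or_gt (((a + b) * ‖Δ‖ ^ 2)) 0 with hK | hK
    · have := key 1 one_pos le_rfl
      nlinarith
    · refine le_of_forall_pos_le_add fun ε hε => ?_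
      set t := min 1 (ε / ((a + b) * ‖Δ‖ ^ 2)) with htdef
      have ht0 : 0 < t := lt_min one_pos (by positivity)
      have ht1 : t ≤ 1 := min_le_left _ _
      have h := key t ht0 ht1
      have : t * ((a + b) * ‖Δ‖ ^ 2) ≤ ε := by
        calc t * ((a + b) * ‖Δ‖ ^ 2) ≤ (ε / ((a + b) * ‖Δ‖ ^ 2)) * ((a + b) * ‖Δ‖ ^ 2) := by
              apply mul_le_mul_of_nonneg_right (min_le_right _ _) hK.le
          _ = ε := by rw [div_mul_cancel₀ _ hK.ne']
      linarith
  -- strong descent from hmin at W₀ combined with hG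
  have hmin0 := hmin W₀
  have e0 : ‖W₀ - W₀‖ = 0 := by simp
  rw [e0] at hmin0
  have e4 : ‖W₀ - V‖ ^ 2 = ‖W' - V‖ ^ 2 - 2 * ⟪W' - V, Δ⟫ + ‖Δ‖ ^ 2 := by
    have heq : W₀ - V = (W' - V) - Δ := by rw [hΔ]; abel
    rw [heq, norm_sub_sq_real]
  have e5 : ⟪c, W₀⟫ = ⟪c, W'⟫ - ⟪c, Δ⟫ := by
    rw [hΔ, inner_sub_right]; ring
  -- descent lemma
  have hd := descent_aux f f' hf L hL.le hlip W₀ W'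
  -- unfold c in hG: ⟪c,Δ⟫ = (1/p)*⟪f' W₀, Δ⟫ + ⟪Y, Δ⟫
  have ec : ⟪c, Δ⟫ = (1 / p) * ⟪f' W₀, Δ⟫ + ⟪Y, Δ⟫ := by
    rw [hc, inner_add_left, real_inner_smul_left]
  have eY : ⟪Y, W' - V⟫ = ⟪Y, W₀ - V⟫ + ⟪Y, Δ⟫ := by
    rw [← inner_add_right]
    congr 1
    rw [hΔ]; abel
  have hΔW : ‖W' - W₀‖ = ‖Δ‖ := by rw [hΔ]
  rw [hΔW]
  have hfd : (1 / p) * f W' ≤ (1 / p) * f W₀ + (1 / p) * ⟪f' W₀, Δ⟫ + a * ‖Δ‖ ^ 2 := by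
    have hΔ' : W' - W₀ = Δ := rfl
    rw [hΔ'] at hd
    have h1p : 0 < 1 / p := by positivity
    have := mul_le_mul_of_nonneg_left hd h1p.le
    calc (1 / p) * f W' ≤ (1 / p) * (f W₀ + ⟪f' W₀, Δ⟫ + L / 2 * ‖Δ‖ ^ 2) := this
      _ = (1 / p) * f W₀ + (1 / p) * ⟪f' W₀, Δ⟫ + a * ‖Δ‖ ^ 2 := by
          rw [ha]; field_simp
  rw [e4, eY]
  linarith [hG, hfd, ec, mul_nonneg hb0.le (sq_nonneg ‖Δ‖)]
end
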